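/- arXiv:2406.11024 — 8 statements merged into one kernel-verified Lean document; each statement's English description precedes it below -/
import Mathlib

section
/- Let V(y,M) = λ(y−2μ(1−y)(1−δ)θ)/(y+2(1−y)(1−δ)) + (1/β)·(λμ(1−y)(1−δ)θ/(y+2(1−y)(1−δ)))². Under the assumption λμθ < 2β, V(0,M) = λμθ(λμθ−4β)/(4β) < 0 and V(1,M) = λ > 0, and V(·,M) is continuous and strictly increasing on [0,1]; hence there is a unique ŷ_M ∈ (0,1) with V(ŷ_M,M) = 0. -/
theorem stmt_5 (lam mu th beta del : ℝ)
    (hlam : lam ∈ Set.Ioo (0:ℝ) 1) (hmu : 0 < mu) (hth : 0 < th) (hbeta : 0 < beta)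
    (hdel : del ∈ Set.Ioo (1/2 : ℝ) 1) (hcost : lam*mu*th < 2*beta)
    (V : ℝ → ℝ)
    (hV : ∀ y, V y = lam*(y - 2*mu*(1-y)*(1-del)*th)/(y+2*(1-y)*(1-del))
        + (1/beta)*(lam*mu*(1-y)*(1-del)*th/(y+2*(1-y)*(1-del)))^2) :
    V 0 = lam*mu*th*(lam*mu*th - 4*beta)/(4*beta) ∧ V 0 < 0 ∧ V 1 = lam ∧ 0 < V 1 ∧
    ContinuousOn V (Set.Icc (0:ℝ) 1) ∧ StrictMonoOn V (Set.Icc (0:ℝ) 1) ∧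
    ∃! yhat : ℝ, yhat ∈ Set.Ioo (0:ℝ) 1 ∧ V yhat = 0 := by
  obtain ⟨hlam0, hlam1⟩ := hlam
  obtain ⟨hdel0, hdel1⟩ := hdel
  have hP : 0 < lam*mu*th := by positivity
  have hD : ∀ y ∈ Set.Icc (0:ℝ) 1, 0 < y + 2*(1-y)*(1-del) := by
    intro y hy
    nlinarith [hy.1, hy.2]
  -- V 0
  have hV0 : V 0 = lam*mu*th*(lam*mu*th - 4*beta)/(4*beta) := by
    rw [hV]
    have hd : (1:ℝ) - del ≠ 0 := by linarith
    norm_num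
    field_simp
    ring
  have hV0neg : V 0 < 0 := by
    rw [hV0]
    apply div_neg_of_neg_of_pos _ (by linarith)
    nlinarith
  have hV1 : V 1 = lam := by
    rw [hV]; norm_num
  have hV1pos : 0 < V 1 := by rw [hV1]; exact hlam0
  -- representation of V as quadratic in u
  have hrep : ∀ y ∈ Set.Icc (0:ℝ) 1,
      V y = lam - lam*(1+mu*th)*(2*(1-y)*(1-del)/(y+2*(1-y)*(1-del)))
        + (lam*mu*th)^2/(4*beta)*(2*(1-y)*(1-del)/(y+2*(1-y)*(1-del)))^2 := by
    intro y hy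
    have hDy := hD y hy
    rw [hV]
    field_simp
    ring
  -- u is strictly decreasing and maps [0,1] into [0,1]
  have hu_mem : ∀ y ∈ Set.Icc (0:ℝ) 1,
      2*(1-y)*(1-del)/(y+2*(1-y)*(1-del)) ∈ Set.Icc (0:ℝ) 1 := by
    intro y hy
    have hDy := hD y hy
    constructor
    · apply div_nonneg _ (le_of_lt hDy)
      nlinarith [hy.2]
    · rw [div_le_one hDy]
      nlinarith [hy.1]
  have hu_anti : ∀ a ∈ Set.Icc (0:ℝ) 1, ∀ b ∈ Set.Icc (0:ℝ) 1, a < b →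
      2*(1-b)*(1-del)/(b+2*(1-b)*(1-del)) < 2*(1-a)*(1-del)/(a+2*(1-a)*(1-del)) := by
    intro a ha b hb hab
    have hDa := hD a ha
    have hDb := hD b hb
    rw [div_lt_div_iff₀ hDb hDa]
    nlinarith [hab]
  -- the quadratic g is strictly decreasing on [0,1]
  have hg : ∀ u v : ℝ, 0 ≤ u → u < v → v ≤ 1 →
      lam - lam*(1+mu*th)*v + (lam*mu*th)^2/(4*beta)*v^2
      < lam - lam*(1+mu*th)*u + (lam*mu*th)^2/(4*beta)*u^2 := by
    intro u v hu huv hv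
    have hk : 0 < (lam*mu*th)^2/(4*beta) := by positivity
    have hk2 : (lam*mu*th)^2 < lam*(1+mu*th)*(4*beta) := by nlinarith
    have hsum : (lam*mu*th)^2/(4*beta)*(u+v) < lam*(1+mu*th) := by
      rw [div_mul_eq_mul_div, div_lt_iff₀ (by linarith : (0:ℝ) < 4*beta)]
      nlinarith [mul_nonneg (sq_nonneg (lam*mu*th)) (by linarith : (0:ℝ) ≤ 2-(u+v))]
    nlinarith [mul_pos (sub_pos.2 huv) (sub_pos.2 hsum)]
  -- strict monotonicity
  have hmono : StrictMonoOn V (Set.Icc (0:ℝ) 1) := by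
    intro a ha b hb hab
    rw [hrep a ha, hrep b hb]
    exact hg _ _ (hu_mem b hb).1 (hu_anti a ha b hb hab) (hu_mem a ha).2
  -- continuity
  have hcont : ContinuousOn V (Set.Icc (0:ℝ) 1) := by
    have h : ContinuousOn (fun y => lam*(y - 2*mu*(1-y)*(1-del)*th)/(y+2*(1-y)*(1-del))
        + (1/beta)*(lam*mu*(1-y)*(1-del)*th/(y+2*(1-y)*(1-del)))^2) (Set.Icc (0:ℝ) 1) := by
      apply ContinuousOn.add
      · apply ContinuousOn.div (by fun_prop) (by fun_prop)
        intro y hy; exact (hD y hy).ne'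
      · apply ContinuousOn.mul continuousOn_const
        apply ContinuousOn.pow
        apply ContinuousOn.div (by fun_prop) (by fun_prop)
        intro y hy; exact (hD y hy).ne'
    exact h.congr (fun y _ => hV y)
  refine ⟨hV0, hV0neg, hV1, hV1pos, hcont, hmono, ?_⟩
  have hsub := intermediate_value_Ioo (by norm_num : (0:ℝ) ≤ 1) hcont
  have h0mem : (0:ℝ) ∈ Set.Ioo (V 0) (V 1) := ⟨hV0neg, hV1pos⟩
  obtain ⟨yhat, hyhat, hVy⟩ := hsub h0mem
  refine ⟨yhat, ⟨hyhat, hVy⟩, ?_⟩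
  rintro z ⟨hz, hVz⟩
  exact hmono.injOn (Set.Ioo_subset_Icc_self hz) (Set.Ioo_subset_Icc_self hyhat)
    (hVz.trans hVy.symm)
end

section
/- Let V(y,I) = (y + 2(1−y)δθ((1−λ)−λμ))/(y+2(1−y)δ) + (1/β)·((1−y)δθ(λμ−(1−λ))/(y+2(1−y)δ))². Under the assumptions μ > (1−λ)/λ and μθ < 2β, V(0,I) < 0 and V(1,I) = 1 > 0, and V(·,I) is strictly increasing on [0,1]; hence there is a unique ŷ_I ∈ (0,1) with V(ŷ_I,I) = 0. -/
theorem stmt_6 (lam mu th beta del : ℝ)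
    (hlam : lam ∈ Set.Ioo (0:ℝ) 1) (hmu : 0 < mu) (hth : 0 < th) (hbeta : 0 < beta)
    (hdel : del ∈ Set.Ioo (1/2 : ℝ) 1)
    (hweight : mu > (1-lam)/lam) (hcost : mu*th < 2*beta)
    (V : ℝ → ℝ)
    (hV : ∀ y, V y = (y + 2*(1-y)*del*th*((1-lam)-lam*mu))/(y+2*(1-y)*del)
        + (1/beta)*((1-y)*del*th*(lam*mu-(1-lam))/(y+2*(1-y)*del))^2) :
    V 0 < 0 ∧ V 1 = 1 ∧ (0:ℝ) < 1 ∧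
    StrictMonoOn V (Set.Icc (0:ℝ) 1) ∧
    ∃! yhat : ℝ, yhat ∈ Set.Ioo (0:ℝ) 1 ∧ V yhat = 0 := by
  obtain ⟨hlam0, hlam1⟩ := hlam
  obtain ⟨hdel0, hdel1⟩ := hdel
  have hc : 0 < lam*mu - (1-lam) := by
    have := (div_lt_iff₀ hlam0).mp hweight
    nlinarith
  set a := th*(lam*mu - (1-lam)) with ha_def
  have ha : 0 < a := mul_pos hth hc
  have ha2 : a < 2*beta := by nlinarith
  have hD : ∀ y ∈ Set.Icc (0:ℝ) 1, 1 ≤ y + 2*(1-y)*del := by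
    intro y hy; obtain ⟨h0, h1⟩ := hy; nlinarith
  have hVT : ∀ y ∈ Set.Icc (0:ℝ) 1,
      V y = 1 - 2*(1+a)*((1-y)*del/(y+2*(1-y)*del))
        + (a^2/beta)*((1-y)*del/(y+2*(1-y)*del))^2 := by
    intro y hy
    have hDy : y + 2*(1-y)*del ≠ 0 := by have := hD y hy; linarith
    rw [hV y, ha_def]
    field_simp
    ring
  have hV0 : V 0 < 0 := by
    have h0 : V 0 = a*(a - 4*beta)/(4*beta) := by
      have h2d : (2*del) ≠ 0 := by positivity
      rw [hV 0, ha_def]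
      field_simp
      ring
    rw [h0]
    apply div_neg_of_neg_of_pos
    · exact mul_neg_of_pos_of_neg ha (by linarith)
    · linarith
  have hV1 : V 1 = 1 := by rw [hV 1]; norm_num
  have hk2 : a^2/beta < 2*(1+a) := by
    rw [div_lt_iff₀ hbeta]
    nlinarith
  have hk0 : 0 ≤ a^2/beta := by positivity
  have key : ∀ s r : ℝ, 0 < s - r → s ≤ 1/2 → 0 ≤ r →
      1 - 2*(1+a)*s + (a^2/beta)*s^2 < 1 - 2*(1+a)*r + (a^2/beta)*r^2 := by
    intro s r hsr' hs2 hr0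
    have hsum : s + r ≤ 1 := by linarith
    have h1 : (a^2/beta)*((s-r)*(s+r)) ≤ (a^2/beta)*(s-r) :=
      mul_le_mul_of_nonneg_left (by nlinarith) hk0
    have h2 := mul_lt_mul_of_pos_right hk2 hsr'
    nlinarith [h1, h2]
  have hmono : StrictMonoOn V (Set.Icc (0:ℝ) 1) := by
    intro x hx y hy hxy
    have hDx : (1:ℝ) ≤ x + 2*(1-x)*del := hD x hx
    have hDy : (1:ℝ) ≤ y + 2*(1-y)*del := hD y hy
    rw [hVT x hx, hVT y hy]
    apply key
    · have hsr : (1-x)*del/(x+2*(1-x)*del) - (1-y)*del/(y+2*(1-y)*del)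
          = del*(y-x)/((x+2*(1-x)*del)*(y+2*(1-y)*del)) := by
        have hx0 : x+2*(1-x)*del ≠ 0 := (show (0:ℝ) < x+2*(1-x)*del by linarith).ne'
        have hy0 : y+2*(1-y)*del ≠ 0 := (show (0:ℝ) < y+2*(1-y)*del by linarith).ne'
        rw [div_sub_div _ _ hx0 hy0]
        ring
      rw [hsr]
      apply div_pos (mul_pos (by linarith) (by linarith))
      exact mul_pos (by linarith) (by linarith)
    · rw [div_le_iff₀ (by linarith)]
      nlinarith [hx.1]
    · apply div_nonneg
      · nlinarith [hy.2]
      · linarith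
  refine ⟨hV0, hV1, zero_lt_one, hmono, ?_⟩
  have hcont : ContinuousOn V (Set.Icc (0:ℝ) 1) := by
    have hVfun : V = fun y => (y + 2*(1-y)*del*th*((1-lam)-lam*mu))/(y+2*(1-y)*del)
        + (1/beta)*((1-y)*del*th*(lam*mu-(1-lam))/(y+2*(1-y)*del))^2 := funext hV
    rw [hVfun]
    apply ContinuousOn.add
    · apply ContinuousOn.div (by fun_prop) (by fun_prop)
      intro y hy; have := hD y hy; intro h; rw [h] at this; linarith
    · apply ContinuousOn.mul continuousOn_const
      apply ContinuousOn.pow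
      apply ContinuousOn.div (by fun_prop) (by fun_prop)
      intro y hy; have := hD y hy; intro h; rw [h] at this; linarith
  have hmem : (0:ℝ) ∈ Set.Ioo (V 0) (V 1) := by
    rw [hV1]; exact ⟨hV0, zero_lt_one⟩
  obtain ⟨yhat, hyhat, hVyhat⟩ := intermediate_value_Ioo (by norm_num : (0:ℝ) ≤ 1) hcont hmem
  refine ⟨yhat, ⟨hyhat, hVyhat⟩, ?_⟩
  rintro z ⟨hz, hVz⟩
  have hzI : z ∈ Set.Icc (0:ℝ) 1 := ⟨hz.1.le, hz.2.le⟩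
  have hyI : yhat ∈ Set.Icc (0:ℝ) 1 := ⟨hyhat.1.le, hyhat.2.le⟩
  exact hmono.injOn hzI hyI (by rw [hVz, hVyhat])
end

section
/- If g : [0,1] → ℝ is three times continuously differentiable with g(0) > 0, g(1) < 0, and g'''(y) > 0 for all y ∈ [0,1], then g has exactly one root in [0,1]. -/
open Set

theorem stmt_7 (g : ℝ → ℝ)
    (hg : ContDiffOn ℝ 3 g (Set.Icc (0:ℝ) 1))
    (h0 : 0 < g 0) (h1 : g 1 < 0)
    (h3 : ∀ y ∈ Set.Icc (0:ℝ) 1, 0 < iteratedDerivWithin 3 g (Set.Icc (0:ℝ) 1) y) :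
    ∃! y : ℝ, y ∈ Set.Icc (0:ℝ) 1 ∧ g y = 0 := by
  set I : Set ℝ := Set.Icc (0:ℝ) 1 with hI
  have hU : UniqueDiffOn ℝ I := uniqueDiffOn_Icc one_pos
  set f1 := iteratedDerivWithin 1 g I with hf1
  set f2 := iteratedDerivWithin 2 g I with hf2
  set f3 := iteratedDerivWithin 3 g I with hf3
  -- derivative facts at interior points
  have key : ∀ n : ℕ, n < 3 → ∀ x ∈ Set.Ioo (0:ℝ) 1,
      HasDerivAt (iteratedDerivWithin n g I) (iteratedDerivWithin (n+1) g I x) x := by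
    intro n hn x hx
    have hxI : x ∈ I := Ioo_subset_Icc_self hx
    have hnhds : I ∈ nhds x := Icc_mem_nhds hx.1 hx.2
    have hd : DifferentiableWithinAt ℝ (iteratedDerivWithin n g I) I x :=
      (hg.differentiableOn_iteratedDerivWithin (by exact_mod_cast hn) hU) x hxI
    have := hd.hasDerivWithinAt
    rw [← iteratedDerivWithin_succ] at this
    exact this.hasDerivAt hnhds
  have hgc : ContinuousOn g I := hg.continuousOn
  -- existence
  have hsub : Set.Icc (g 1) (g 0) ⊆ g '' I := by
    have := intermediate_value_Icc' (le_of_lt one_pos) hgc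
    simpa using this
  obtain ⟨y, hyI, hy⟩ := hsub ⟨le_of_lt h1, le_of_lt h0⟩
  refine ⟨y, ⟨hyI, hy⟩, ?_⟩
  -- uniqueness: show no two distinct roots
  have claim : ∀ a b : ℝ, a ∈ I → b ∈ I → g a = 0 → g b = 0 → a < b → False := by
    intro a b haI hbI hga hgb hab
    have ha0 : 0 < a := lt_of_le_of_ne haI.1 (by rintro rfl; exact h0.ne' hga)
    have hb1 : b < 1 := lt_of_le_of_ne hbI.2 (by rintro rfl; exact h1.ne hgb)
    have ha1 : a < 1 := lt_of_lt_of_le hab hbI.2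
    have hb0 : 0 < b := lt_trans ha0 hab
    have hg0 : ∀ x ∈ Set.Ioo (0:ℝ) 1, HasDerivAt g (f1 x) x := by
      intro x hx
      have := key 0 (by norm_num) x hx
      simpa [iteratedDerivWithin_zero, hf1, iteratedDerivWithin_one] using this
    -- MVT on [0, a]
    obtain ⟨p, hp, hpv⟩ := exists_hasDerivAt_eq_slope g f1 ha0
      (hgc.mono (Icc_subset_Icc le_rfl haI.2))
      (fun x hx => hg0 x ⟨hx.1, lt_trans hx.2 ha1⟩)
    have hp01 : p ∈ Set.Ioo (0:ℝ) 1 := ⟨hp.1, lt_trans hp.2 ha1⟩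
    have hpneg : f1 p < 0 := by
      rw [hpv, hga]
      exact div_neg_of_neg_of_pos (by linarith) (by linarith)
    -- Rolle on [a, b]
    obtain ⟨c, hc, hcv⟩ := exists_hasDerivAt_eq_slope g f1 hab
      (hgc.mono (Icc_subset_Icc haI.1 hbI.2))
      (fun x hx => hg0 x ⟨lt_trans ha0 hx.1, lt_trans hx.2 hb1⟩)
    have hc01 : c ∈ Set.Ioo (0:ℝ) 1 := ⟨lt_trans ha0 hc.1, lt_trans hc.2 hb1⟩
    have hczero : f1 c = 0 := by rw [hcv, hga, hgb]; simp
    -- MVT on [b, 1]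
    obtain ⟨q, hq, hqv⟩ := exists_hasDerivAt_eq_slope g f1 hb1
      (hgc.mono (Icc_subset_Icc hbI.1 le_rfl))
      (fun x hx => hg0 x ⟨lt_trans hb0 hx.1, hx.2⟩)
    have hq01 : q ∈ Set.Ioo (0:ℝ) 1 := ⟨lt_trans hb0 hq.1, hq.2⟩
    have hqneg : f1 q < 0 := by
      rw [hqv, hgb]
      exact div_neg_of_neg_of_pos (by linarith) (by linarith)
    -- now on f1 : continuity and derivatives
    have hf1c : ContinuousOn f1 I :=
      hg.continuousOn_iteratedDerivWithin (by norm_num) hU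
    have hf1d : ∀ x ∈ Set.Ioo (0:ℝ) 1, HasDerivAt f1 (f2 x) x :=
      fun x hx => key 1 (by norm_num) x hx
    -- MVT on [p, c]
    have hpc : p < c := lt_trans hp.2 hc.1
    obtain ⟨r, hr, hrv⟩ := exists_hasDerivAt_eq_slope f1 f2 hpc
      (hf1c.mono (Icc_subset_Icc (le_of_lt hp01.1) (le_of_lt hc01.2)))
      (fun x hx => hf1d x ⟨lt_trans hp01.1 hx.1, lt_trans hx.2 hc01.2⟩)
    have hr01 : r ∈ Set.Ioo (0:ℝ) 1 := ⟨lt_trans hp01.1 hr.1, lt_trans hr.2 hc01.2⟩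
    have hrpos : 0 < f2 r := by
      rw [hrv, hczero]
      exact div_pos (by linarith) (by linarith)
    -- MVT on [c, q]
    have hcq : c < q := lt_trans hc.2 hq.1
    obtain ⟨s, hs, hsv⟩ := exists_hasDerivAt_eq_slope f1 f2 hcq
      (hf1c.mono (Icc_subset_Icc (le_of_lt hc01.1) (le_of_lt hq01.2)))
      (fun x hx => hf1d x ⟨lt_trans hc01.1 hx.1, lt_trans hx.2 hq01.2⟩)
    have hs01 : s ∈ Set.Ioo (0:ℝ) 1 := ⟨lt_trans hc01.1 hs.1, lt_trans hs.2 hq01.2⟩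
    have hsneg : f2 s < 0 := by
      rw [hsv, hczero]
      exact div_neg_of_neg_of_pos (by linarith) (by linarith)
    -- f2 strictly monotone on I
    have hmono : StrictMonoOn f2 I := by
      apply strictMonoOn_of_deriv_pos (convex_Icc _ _)
        (hg.continuousOn_iteratedDerivWithin (by norm_num) hU)
      intro x hx
      rw [interior_Icc] at hx
      have h2 := key 2 (by norm_num) x hx
      rw [h2.deriv]
      exact h3 x (Ioo_subset_Icc_self hx)
    have hrs : r < s := lt_trans hr.2 hs.1  -- r < c? hr.2 : r < c, hs.1 : c < s
    have := hmono (Ioo_subset_Icc_self hr01) (Ioo_subset_Icc_self hs01) hrs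
    linarith
  intro z hz
  rcases lt_trichotomy z y with h | h | h
  · exact absurd (claim z y hz.1 hyI hz.2 hy h) id
  · exact h
  · exact absurd (claim y z hyI hz.1 hy hz.2 h) id
end

section
/- Define g_M(y) = 1 + (ρ(1/2 − (1−δ)θ) − 1 − κ)y − ρ(1/2 − (1−δ)θ)y² + ρ·y·((1−δ)θ(1−y))²·λμ/(β(y+2(1−y)(1−δ))). Then g_M(0) = 1, g_M(1) = −κ, and the third derivative g_M'''(y) = 12(1−δ)³θ²ρλμ/(β(y+2(1−y)(1−δ))⁴) is strictly positive on [0,1]; consequently g_M has a unique root y*_M in (0,1). -/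
set_option maxHeartbeats 1000000 in
theorem stmt_8 (rho kap lam mu th beta del : ℝ)
    (hrho : 0 < rho) (hkap : 0 < kap) (hlam : 0 < lam) (hmu : 0 < mu)
    (hth : 0 < th) (hbeta : 0 < beta) (hdel : del ∈ Set.Ioo (1/2 : ℝ) 1)
    (g : ℝ → ℝ)
    (hg : ∀ y, g y = 1 + (rho*(1/2 - (1-del)*th) - 1 - kap)*y
        - rho*(1/2 - (1-del)*th)*y^2
        + rho*y*((1-del)*th*(1-y))^2*lam*mu/(beta*(y+2*(1-y)*(1-del)))) :
    g 0 = 1 ∧ g 1 = -kap ∧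
    (∀ y ∈ Set.Icc (0:ℝ) 1,
      iteratedDeriv 3 g y = 12*(1-del)^3*th^2*rho*lam*mu/(beta*(y+2*(1-y)*(1-del))^4) ∧
      0 < 12*(1-del)^3*th^2*rho*lam*mu/(beta*(y+2*(1-y)*(1-del))^4)) ∧
    ∃! y : ℝ, y ∈ Set.Ioo (0:ℝ) 1 ∧ g y = 0 := by
  obtain ⟨hdl, hdu⟩ := hdel
  have h1d : 0 < 1 - del := by linarith
  set aa : ℝ := 2*del - 1 with haa_def
  set bb : ℝ := 2*(1 - del) with hbb_def
  have haa : 0 < aa := by rw [haa_def]; linarith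
  have hbb : 0 < bb := by rw [hbb_def]; linarith
  set A : ℝ := rho*(1/2 - (1-del)*th) - 1 - kap with hA_def
  set B : ℝ := rho*(1/2 - (1-del)*th) with hB_def
  set C : ℝ := rho*((1-del)*th)^2*lam*mu/beta with hC_def
  have hC : 0 < C := by
    rw [hC_def]
    exact div_pos (mul_pos (mul_pos (mul_pos hrho (pow_pos (mul_pos h1d hth) 2)) hlam) hmu) hbeta
  set K : ℝ := -(C*bb*(aa+bb)^2/aa^3) with hK_def
  have hK : K < 0 := by
    rw [hK_def]
    have : 0 < C*bb*(aa+bb)^2/aa^3 :=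
      div_pos (mul_pos (mul_pos hC hbb) (pow_pos (by linarith) 2)) (pow_pos haa 3)
    linarith
  set q1 : ℝ := (-2*aa-bb)/aa^2 with hq1_def
  set q0 : ℝ := (aa+bb)^2/aa^3 with hq0_def
  set h : ℝ → ℝ := fun y => 1 + A*y - B*y^2 + C*(y^2/aa + q1*y + q0) + K*(aa*y+bb)⁻¹ with hh_def
  set h1 : ℝ → ℝ := fun y => A - B*(2*y) + C*(2*y/aa + q1) + (K*(-aa))*((aa*y+bb)⁻¹)^2 with hh1_def
  set h2 : ℝ → ℝ := fun y => (-(2*B) + 2*C/aa) + (K*(2*aa^2))*((aa*y+bb)⁻¹)^3 with hh2_def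
  set h3 : ℝ → ℝ := fun y => (K*(-6*aa^3))*((aa*y+bb)⁻¹)^4 with hh3_def
  -- g = h off the pole
  have key : ∀ y : ℝ, aa*y+bb ≠ 0 → g y = h y := by
    intro y hy
    have hDen : y + 2*(1-y)*(1-del) = aa*y + bb := by rw [haa_def, hbb_def]; ring
    rw [hg, hDen]
    simp only [hh_def, hC_def, hK_def, hq1_def, hq0_def]
    have ha' : aa ≠ 0 := haa.ne'
    generalize hD : aa*y+bb = D at hy ⊢
    field_simp
    subst hD
    rw [haa_def, hbb_def]
    ring
  have hpos : ∀ y : ℝ, y ∈ Set.Icc (0:ℝ) 1 → 0 < aa*y+bb := by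
    intro y hy
    have : 0 ≤ aa*y := mul_nonneg haa.le hy.1
    linarith
  have hne : ∀ y : ℝ, y ∈ Set.Icc (0:ℝ) 1 → aa*y+bb ≠ 0 := fun y hy => (hpos y hy).ne'
  -- derivative facts
  have hDinv : ∀ y : ℝ, aa*y+bb ≠ 0 → HasDerivAt (fun y => (aa*y+bb)⁻¹) (-aa/(aa*y+bb)^2) y := by
    intro y hy
    have hDaff : HasDerivAt (fun y => aa*y+bb) aa y := by
      simpa using ((hasDerivAt_id y).const_mul aa).add_const bb
    exact hDaff.inv hy
  have hD_h : ∀ y : ℝ, aa*y+bb ≠ 0 → HasDerivAt h (h1 y) y := by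
    intro y hy
    have t1 : HasDerivAt (fun y:ℝ => 1 + A*y) A y := by
      simpa using ((hasDerivAt_id y).const_mul A).const_add 1
    have t2 : HasDerivAt (fun y:ℝ => B*y^2) (B*(2*y)) y := by
      simpa using (hasDerivAt_pow 2 y).const_mul B
    have t3 : HasDerivAt (fun y:ℝ => C*(y^2/aa + q1*y + q0)) (C*(2*y/aa + q1)) y := by
      have : HasDerivAt (fun y:ℝ => y^2/aa + q1*y + q0) (2*y/aa + q1) y := by
        simpa using (((hasDerivAt_pow 2 y).div_const aa).add
          ((hasDerivAt_id y).const_mul q1)).add_const q0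
      exact this.const_mul C
    have t4 : HasDerivAt (fun y:ℝ => K*(aa*y+bb)⁻¹) (K*(-aa/(aa*y+bb)^2)) y :=
      (hDinv y hy).const_mul K
    have := ((t1.sub t2).add t3).add t4
    refine this.congr_deriv ?_
    simp only [hh1_def]
    field_simp
    try ring
  have hD_h1 : ∀ y : ℝ, aa*y+bb ≠ 0 → HasDerivAt h1 (h2 y) y := by
    intro y hy
    have t1 : HasDerivAt (fun y:ℝ => A - B*(2*y)) (-(B*2)) y := by
      simpa using (((hasDerivAt_id y).const_mul 2).const_mul B).const_sub A
    have t2 : HasDerivAt (fun y:ℝ => C*(2*y/aa + q1)) (C*(2/aa)) y := by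
      have : HasDerivAt (fun y:ℝ => 2*y/aa + q1) (2/aa) y := by
        simpa using (((hasDerivAt_id y).const_mul 2).div_const aa).add_const q1
      exact this.const_mul C
    have t3 : HasDerivAt (fun y:ℝ => (K*(-aa))*((aa*y+bb)⁻¹)^2)
        ((K*(-aa))*(2*((aa*y+bb)⁻¹)^1*(-aa/(aa*y+bb)^2))) y := by
      have := ((hDinv y hy).pow 2).const_mul (K*(-aa))
      simpa using this
    have := (t1.add t2).add t3
    refine this.congr_deriv ?_
    simp only [hh2_def]
    field_simp
    try ring
  have hD_h2 : ∀ y : ℝ, aa*y+bb ≠ 0 → HasDerivAt h2 (h3 y) y := by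
    intro y hy
    have t3 : HasDerivAt (fun y:ℝ => (K*(2*aa^2))*((aa*y+bb)⁻¹)^3)
        ((K*(2*aa^2))*(3*((aa*y+bb)⁻¹)^2*(-aa/(aa*y+bb)^2))) y := by
      have := ((hDinv y hy).pow 3).const_mul (K*(2*aa^2))
      simpa using this
    have := t3.const_add (-(2*B) + 2*C/aa)
    refine this.congr_deriv ?_
    simp only [hh3_def]
    field_simp
    try ring
  -- the open set
  have hUopen : IsOpen {y : ℝ | aa*y+bb ≠ 0} :=
    isOpen_ne_fun ((continuous_const.mul continuous_id).add continuous_const) continuous_const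
  have hmemU : ∀ z : ℝ, aa*z+bb ≠ 0 → {y : ℝ | aa*y+bb ≠ 0} ∈ nhds z :=
    fun z hz => hUopen.mem_nhds hz
  -- value facts
  have hg0 : g 0 = 1 := by rw [hg]; norm_num
  have hg1 : g 1 = -kap := by rw [hg, hA_def, hB_def]; norm_num; ring
  have hKval : K*(-6*aa^3) = 12*(1-del)^3*th^2*rho*lam*mu/beta := by
    rw [hK_def, hC_def, haa_def, hbb_def]
    have h2d : (2*del-1) ≠ 0 := by linarith
    field_simp
    rw [div_eq_iff (by linarith : del*2-1 ≠ 0)]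
    ring
  refine ⟨hg0, hg1, ?_, ?_⟩
  · -- iterated derivative
    intro y hy
    have hyne := hne y hy
    have hypos := hpos y hy
    have ev0 : g =ᶠ[nhds y] h := Filter.eventually_of_mem (hmemU y hyne) key
    have evh1 : deriv h =ᶠ[nhds y] h1 :=
      Filter.eventually_of_mem (hmemU y hyne) (fun w hw => (hD_h w hw).deriv)
    have ev1 : deriv g =ᶠ[nhds y] h1 := ev0.deriv.trans evh1
    have evh2 : deriv h1 =ᶠ[nhds y] h2 :=
      Filter.eventually_of_mem (hmemU y hyne) (fun w hw => (hD_h1 w hw).deriv)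
    have ev2 : deriv (deriv g) =ᶠ[nhds y] h2 := ev1.deriv.trans evh2
    have ev3 : deriv (deriv (deriv g)) y = h3 y := by
      rw [ev2.deriv_eq]
      exact (hD_h2 y hyne).deriv
    have hit : iteratedDeriv 3 g y = h3 y := by
      rw [show (3:ℕ) = 2+1 from rfl, iteratedDeriv_succ,
        show (2:ℕ) = 1+1 from rfl, iteratedDeriv_succ,
        show (1:ℕ) = 0+1 from rfl, iteratedDeriv_succ, iteratedDeriv_zero]
      exact ev3
    have hDen : y + 2*(1-y)*(1-del) = aa*y + bb := by rw [haa_def, hbb_def]; ring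
    constructor
    · rw [hit]
      simp only [hh3_def]
      rw [hDen, hKval]
      field_simp
    · rw [hDen]
      have hn : 0 < 12*(1-del)^3*th^2*rho*lam*mu :=
        mul_pos (mul_pos (mul_pos (mul_pos (mul_pos (by norm_num : (0:ℝ) < 12)
          (pow_pos h1d 3)) (pow_pos hth 2)) hrho) hlam) hmu
      have hd : 0 < beta*(aa*y+bb)^4 := mul_pos hbeta (pow_pos hypos 4)
      exact div_pos hn hd
  · -- unique root
    have hcont : ContinuousOn h (Set.Icc (0:ℝ) 1) :=
      fun z hz => ((hD_h z (hne z hz)).continuousAt).continuousWithinAt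
    have hgh : ∀ z ∈ Set.Icc (0:ℝ) 1, g z = h z := fun z hz => key z (hne z hz)
    have hh0 : h 0 = 1 := by rw [← hgh 0 (by norm_num)]; exact hg0
    have hh1v : h 1 = -kap := by rw [← hgh 1 (by norm_num)]; exact hg1
    -- existence
    have hex : ∃ x ∈ Set.Ioo (0:ℝ) 1, h x = 0 := by
      have := intermediate_value_Ioo' (by norm_num : (0:ℝ) ≤ 1) hcont
      rw [hh0, hh1v] at this
      have h0mem : (0:ℝ) ∈ Set.Ioo (-kap) 1 := ⟨by linarith, by norm_num⟩
      obtain ⟨x, hx, hx0⟩ := this h0mem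
      exact ⟨x, hx, hx0⟩
    -- strict monotone h2
    have hmono : StrictMonoOn h2 (Set.Icc (0:ℝ) 1) := by
      apply strictMonoOn_of_deriv_pos (convex_Icc 0 1)
      · exact fun z hz => ((hD_h2 z (hne z hz)).continuousAt).continuousWithinAt
      · intro z hz
        rw [interior_Icc] at hz
        have hz' : z ∈ Set.Icc (0:ℝ) 1 := Set.Ioo_subset_Icc_self hz
        rw [(hD_h2 z (hne z hz')).deriv]
        simp only [hh3_def]
        have hzpos := hpos z hz'
        have hKa : 0 < K*(-6*aa^3) :=
          mul_pos_of_neg_of_neg hK (by have := pow_pos haa 3; linarith)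
        exact mul_pos hKa (pow_pos (inv_pos.mpr hzpos) 4)
    -- no two roots
    have uniq : ∀ u v : ℝ, u ∈ Set.Ioo (0:ℝ) 1 → v ∈ Set.Ioo (0:ℝ) 1 →
        g u = 0 → g v = 0 → u < v → False := by
      intro u v hu hv hgu hgv huv
      have huI : u ∈ Set.Icc (0:ℝ) 1 := Set.Ioo_subset_Icc_self hu
      have hvI : v ∈ Set.Icc (0:ℝ) 1 := Set.Ioo_subset_Icc_self hv
      have hhu : h u = 0 := by rw [← hgh u huI]; exact hgu
      have hhv : h v = 0 := by rw [← hgh v hvI]; exact hgv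
      have hsub : ∀ s t : ℝ, 0 ≤ s → t ≤ 1 → Set.Icc s t ⊆ Set.Icc (0:ℝ) 1 :=
        fun s t hs ht => Set.Icc_subset_Icc hs ht
      obtain ⟨c1, hc1, hc1v⟩ := exists_hasDerivAt_eq_slope h h1 hu.1
        (hcont.mono (hsub 0 u le_rfl huI.2))
        (fun x hx => hD_h x (hne x (hsub 0 u le_rfl huI.2 (Set.Ioo_subset_Icc_self hx))))
      obtain ⟨c2, hc2, hc2v⟩ := exists_hasDerivAt_eq_slope h h1 huv
        (hcont.mono (hsub u v huI.1 hvI.2))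
        (fun x hx => hD_h x (hne x (hsub u v huI.1 hvI.2 (Set.Ioo_subset_Icc_self hx))))
      obtain ⟨c3, hc3, hc3v⟩ := exists_hasDerivAt_eq_slope h h1 hv.2
        (hcont.mono (hsub v 1 hvI.1 le_rfl))
        (fun x hx => hD_h x (hne x (hsub v 1 hvI.1 le_rfl (Set.Ioo_subset_Icc_self hx))))
      rw [hhu, hh0] at hc1v
      rw [hhu, hhv] at hc2v
      rw [hhv, hh1v] at hc3v
      have hc1neg : h1 c1 < 0 := by
        rw [hc1v]
        exact div_neg_of_neg_of_pos (by norm_num) (by have := hu.1; linarith [hc1.1])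
      have hc2z : h1 c2 = 0 := by rw [hc2v]; simp
      have hc3neg : h1 c3 < 0 := by
        rw [hc3v]
        exact div_neg_of_neg_of_pos (by linarith) (by have := hv.2; linarith [hc3.2])
      have hc1c2 : c1 < c2 := lt_trans hc1.2 hc2.1
      have hc2c3 : c2 < c3 := lt_trans hc2.2 hc3.1
      have hIc1 : (0:ℝ) < c1 := hc1.1
      have hIc3 : c3 < 1 := hc3.2
      have hcont1 : ContinuousOn h1 (Set.Icc (0:ℝ) 1) :=
        fun z hz => ((hD_h1 z (hne z hz)).continuousAt).continuousWithinAt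
      have hc2le : c2 ≤ 1 := by linarith
      have hc2ge : 0 ≤ c2 := by linarith
      obtain ⟨d1, hd1, hd1v⟩ := exists_hasDerivAt_eq_slope h1 h2 hc1c2
        (hcont1.mono (hsub c1 c2 hIc1.le hc2le))
        (fun x hx => hD_h1 x (hne x (hsub c1 c2 hIc1.le hc2le (Set.Ioo_subset_Icc_self hx))))
      obtain ⟨d2, hd2, hd2v⟩ := exists_hasDerivAt_eq_slope h1 h2 hc2c3
        (hcont1.mono (hsub c2 c3 hc2ge hIc3.le))
        (fun x hx => hD_h1 x (hne x (hsub c2 c3 hc2ge hIc3.le (Set.Ioo_subset_Icc_self hx))))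
      rw [hc2z] at hd1v hd2v
      have hd1pos : 0 < h2 d1 := by
        rw [hd1v]
        exact div_pos (by linarith) (by linarith [hc1c2])
      have hd2neg : h2 d2 < 0 := by
        rw [hd2v]
        exact div_neg_of_neg_of_pos (by linarith) (by linarith [hc2c3])
      have hd1I : d1 ∈ Set.Icc (0:ℝ) 1 :=
        ⟨by linarith [hd1.1], by linarith [hd1.2]⟩
      have hd2I : d2 ∈ Set.Icc (0:ℝ) 1 :=
        ⟨by linarith [hd2.1], by linarith [hd2.2]⟩
      have : h2 d1 < h2 d2 := hmono hd1I hd2I (by linarith [hd1.2, hd2.1])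
      linarith
    obtain ⟨x, hx, hhx⟩ := hex
    have hgx : g x = 0 := by rw [hgh x (Set.Ioo_subset_Icc_self hx)]; exact hhx
    refine ⟨x, ⟨hx, hgx⟩, ?_⟩
    rintro y ⟨hy, hgy⟩
    rcases lt_trichotomy y x with hlt | heq | hgt
    · exact (uniq y x hy hx hgy hgx hlt).elim
    · exact heq
    · exact (uniq x y hx hy hgx hgy hgt).elim
end

section
/- Define g_I(y) = 1 + (ρ(1/2 − δθ) − 1 − κ)y − ρ(1/2 − δθ)y² + ρ·y·(δθ(1−y))²·(λμ−(1−λ))/(β(y+2(1−y)δ)). If μ > (1−λ)/λ, then g_I(0) = 1, g_I(1) = −κ, and g_I'''(y) = 12δ³θ²ρ(λμ−(1−λ))/(β(y+2(1−y)δ)⁴) > 0 on [0,1]; consequently g_I has a unique root y*_I in (0,1). -/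
lemma stmt_9_aux1 (K a b y : ℝ) (h : b - a*y ≠ 0) :
    HasDerivAt (fun z : ℝ => K/(b - a*z)) (K*a/(b - a*y)^2) y := by
  have := ((((hasDerivAt_id y).const_mul a).const_sub b).inv h).const_mul K
  simp only [div_eq_mul_inv]
  refine this.congr_deriv ?_
  simp only [id]
  field_simp

lemma stmt_9_aux2 (K a b y : ℝ) (h : b - a*y ≠ 0) :
    HasDerivAt (fun z : ℝ => K/(b - a*z)^2) (K*(2*a)/(b - a*y)^3) y := by
  have hp : HasDerivAt (fun z : ℝ => (b - a*z)^2)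
      (2*(b - a*y)^(2-1)*(-(a*1))) y :=
    (((hasDerivAt_id y).const_mul a).const_sub b).pow 2
  have := (hp.inv (pow_ne_zero 2 h)).const_mul K
  simp only [div_eq_mul_inv]
  refine this.congr_deriv ?_
  field_simp
  ring

lemma stmt_9_aux3 (K a b y : ℝ) (h : b - a*y ≠ 0) :
    HasDerivAt (fun z : ℝ => K/(b - a*z)^3) (K*(3*a)/(b - a*y)^4) y := by
  have hp : HasDerivAt (fun z : ℝ => (b - a*z)^3)
      (3*(b - a*y)^(3-1)*(-(a*1))) y :=
    (((hasDerivAt_id y).const_mul a).const_sub b).pow 3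
  have := (hp.inv (pow_ne_zero 3 h)).const_mul K
  simp only [div_eq_mul_inv]
  refine this.congr_deriv ?_
  field_simp

set_option maxHeartbeats 1000000 in
theorem stmt_9 (rho kap lam mu th beta del : ℝ)
    (hrho : 0 < rho) (hkap : 0 < kap) (hlam : lam ∈ Set.Ioo (0:ℝ) 1) (hmu : 0 < mu)
    (hth : 0 < th) (hbeta : 0 < beta) (hdel : del ∈ Set.Ioo (1/2 : ℝ) 1)
    (hweight : mu > (1-lam)/lam)
    (g : ℝ → ℝ)
    (hg : ∀ y, g y = 1 + (rho*(1/2 - del*th) - 1 - kap)*y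
        - rho*(1/2 - del*th)*y^2
        + rho*y*(del*th*(1-y))^2*(lam*mu-(1-lam))/(beta*(y+2*(1-y)*del))) :
    g 0 = 1 ∧ g 1 = -kap ∧
    (∀ y ∈ Set.Icc (0:ℝ) 1,
      iteratedDeriv 3 g y = 12*del^3*th^2*rho*(lam*mu-(1-lam))/(beta*(y+2*(1-y)*del)^4) ∧
      0 < 12*del^3*th^2*rho*(lam*mu-(1-lam))/(beta*(y+2*(1-y)*del)^4)) ∧
    ∃! y : ℝ, y ∈ Set.Ioo (0:ℝ) 1 ∧ g y = 0 := by
  obtain ⟨hlam0, hlam1⟩ := hlam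
  obtain ⟨hdel0, hdel1⟩ := hdel
  have hMpos : 0 < lam*mu - (1-lam) := by
    have h := (div_lt_iff₀ hlam0).mp hweight
    nlinarith
  have hspos : 0 < 2*del - 1 := by linarith
  have hbne : beta ≠ 0 := ne_of_gt hbeta
  have hsne : 2*del - 1 ≠ 0 := ne_of_gt hspos
  have hd0 : 0 < del := by linarith
  set M := lam*mu - (1-lam) with hMdef
  set s := 2*del - 1 with hsdef
  set C0 := rho*del^2*th^2*M/beta with hC0
  set K := 2*del*C0/s^3 with hKdef
  set A := rho*(1/2 - del*th) - 1 - kap with hA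
  set B := rho*(1/2 - del*th) with hB
  have hC0pos : 0 < C0 := by
    rw [hC0]
    apply div_pos _ hbeta
    have : 0 < rho*del^2*th^2 := by positivity
    exact mul_pos this hMpos
  have hKpos : 0 < K := by
    rw [hKdef]
    apply div_pos (by nlinarith) (by positivity)
  set U := Set.Iio (2*del/s) with hU
  have hUopen : IsOpen U := isOpen_Iio
  have hDpos : ∀ y ∈ U, 0 < 2*del - s*y := by
    intro y hy
    have h1 : y < 2*del/s := hy
    have h2 : y * s < 2*del := (lt_div_iff₀ hspos).mp h1
    nlinarith
  have hU01 : Set.Icc (0:ℝ) 1 ⊆ U := by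
    intro y hy
    have h1 : (1:ℝ) < 2*del/s := by
      rw [lt_div_iff₀ hspos]; nlinarith
    exact lt_of_le_of_lt hy.2 h1
  have hDform : ∀ y : ℝ, y + 2*(1-y)*del = 2*del - s*y := by
    intro y; rw [hsdef]; ring
  set F : ℝ → ℝ := fun y => 1 + A*y - B*y^2
      + C0*(-(y^2)/s - (2-2*del)*y/s^2 - 1/s^3) + K/(2*del - s*y) with hF
  set F1 : ℝ → ℝ := fun y => A - 2*B*y + C0*(-(2*y)/s - (2-2*del)/s^2)
      + K*s/(2*del - s*y)^2 with hF1
  set F2 : ℝ → ℝ := fun y => -(2*B) - 2*C0/s + K*s*(2*s)/(2*del - s*y)^3 with hF2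
  set F3 : ℝ → ℝ := fun y => K*s*(2*s)*(3*s)/(2*del - s*y)^4 with hF3
  -- g agrees with F on U
  have hgh : Set.EqOn g F U := by
    intro y hy
    have hDne : 2*del - s*y ≠ 0 := ne_of_gt (hDpos y hy)
    rw [hg y, hF]
    simp only
    rw [hDform y, hKdef, hC0, hsdef]
    rw [hsdef] at hDne
    rw [hsdef] at hsne
    have h4 : del*2 - y*(del*2-1) ≠ 0 := by intro h; apply hDne; linarith
    have h5 : del*2-1 ≠ 0 := by intro h; apply hsne; linarith
    field_simp
    ring
  -- derivative chains
  have hder1 : ∀ y ∈ U, HasDerivAt F (F1 y) y := by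
    intro y hy
    have hDne : 2*del - s*y ≠ 0 := ne_of_gt (hDpos y hy)
    have hid : HasDerivAt (fun z : ℝ => z) 1 y := hasDerivAt_id y
    have hsq : HasDerivAt (fun z : ℝ => z^2) (2*y) y := by
      simpa using hasDerivAt_pow 2 y
    have hpoly : HasDerivAt (fun z : ℝ => 1 + A*z - B*z^2
        + C0*(-(z^2)/s - (2-2*del)*z/s^2 - 1/s^3))
        (A - 2*B*y + C0*(-(2*y)/s - (2-2*del)/s^2)) y := by
      have hinner : HasDerivAt (fun z : ℝ => -(z^2)/s - (2-2*del)*z/s^2 - 1/s^3)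
          (-(2*y)/s - (2-2*del)/s^2) y := by
        have := (((hsq.neg).div_const s).sub ((hid.const_mul (2-2*del)).div_const (s^2))).sub
          (hasDerivAt_const y (1/s^3))
        refine this.congr_deriv ?_
        ring
      have := (((hasDerivAt_const y (1:ℝ)).add (hid.const_mul A)).sub
        (hsq.const_mul B)).add (hinner.const_mul C0)
      refine this.congr_deriv ?_
      ring
    exact hpoly.add (stmt_9_aux1 K s (2*del) y hDne)
  have hder2 : ∀ y ∈ U, HasDerivAt F1 (F2 y) y := by
    intro y hy
    have hDne : 2*del - s*y ≠ 0 := ne_of_gt (hDpos y hy)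
    have hid : HasDerivAt (fun z : ℝ => z) 1 y := hasDerivAt_id y
    have hpoly : HasDerivAt (fun z : ℝ => A - 2*B*z + C0*(-(2*z)/s - (2-2*del)/s^2))
        (-(2*B) - 2*C0/s) y := by
      have hinner : HasDerivAt (fun z : ℝ => -(2*z)/s - (2-2*del)/s^2) (-2/s) y := by
        have := (((hid.const_mul 2).neg).div_const s).sub
          (hasDerivAt_const y ((2-2*del)/s^2))
        refine this.congr_deriv ?_
        ring
      have := ((hasDerivAt_const y A).sub (hid.const_mul (2*B))).add (hinner.const_mul C0)
      refine this.congr_deriv ?_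
      ring
    exact hpoly.add (stmt_9_aux2 (K*s) s (2*del) y hDne)
  have hder3 : ∀ y ∈ U, HasDerivAt F2 (F3 y) y := by
    intro y hy
    have hDne : 2*del - s*y ≠ 0 := ne_of_gt (hDpos y hy)
    have := (hasDerivAt_const y (-(2*B) - 2*C0/s)).add
      (stmt_9_aux3 (K*s*(2*s)) s (2*del) y hDne)
    refine this.congr_deriv ?_
    ring
  -- transfer to g
  have hgU1 : ∀ y ∈ U, HasDerivAt g (F1 y) y := fun y hy =>
    (hder1 y hy).congr_of_eventuallyEq (Filter.eventuallyEq_of_mem (hUopen.mem_nhds hy) hgh)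
  have hdg1 : ∀ y ∈ U, deriv g y = F1 y := fun y hy => (hgU1 y hy).deriv
  have hgU2 : ∀ y ∈ U, HasDerivAt (deriv g) (F2 y) y := fun y hy =>
    (hder2 y hy).congr_of_eventuallyEq (Filter.eventuallyEq_of_mem (hUopen.mem_nhds hy) hdg1)
  have hdg2 : ∀ y ∈ U, deriv (deriv g) y = F2 y := fun y hy => (hgU2 y hy).deriv
  have hgU3 : ∀ y ∈ U, HasDerivAt (deriv (deriv g)) (F3 y) y := fun y hy =>
    (hder3 y hy).congr_of_eventuallyEq (Filter.eventuallyEq_of_mem (hUopen.mem_nhds hy) hdg2)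
  have hdg3 : ∀ y ∈ U, deriv (deriv (deriv g)) y = F3 y := fun y hy => (hgU3 y hy).deriv
  have hF3eq : ∀ y : ℝ, 2*del - s*y ≠ 0 →
      F3 y = 12*del^3*th^2*rho*M/(beta*(y+2*(1-y)*del)^4) := by
    intro y hDne
    rw [hF3]
    simp only
    rw [hDform y, hKdef, hC0, hsdef]
    rw [hsdef] at hDne
    rw [hsdef] at hsne
    have h4 : del*2 - y*(del*2-1) ≠ 0 := by intro h; apply hDne; linarith
    have h5 : del*2-1 ≠ 0 := by intro h; apply hsne; linarith
    field_simp
    ring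
  have hF3pos : ∀ y : ℝ, 0 < 2*del - s*y → 0 < F3 y := by
    intro y hD
    rw [hF3]
    simp only
    apply div_pos _ (pow_pos hD 4)
    have h2s : (0:ℝ) < 2*s := by linarith
    have h3s : (0:ℝ) < 3*s := by linarith
    exact mul_pos (mul_pos (mul_pos hKpos hspos) h2s) h3s
  -- values at 0 and 1
  have hg0 : g 0 = 1 := by
    rw [hg 0]; norm_num
  have hg1 : g 1 = -kap := by
    rw [hg 1, hA, hB]; norm_num; ring
  -- continuity
  have hcont : ContinuousOn g (Set.Icc (0:ℝ) 1) := fun y hy =>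
    ((hgU1 y (hU01 hy)).continuousAt).continuousWithinAt
  -- strict convexity of F1 on [0,1]
  have hconv : StrictConvexOn ℝ (Set.Icc (0:ℝ) 1) F1 := by
    apply strictConvexOn_of_deriv2_pos (convex_Icc 0 1)
    · exact fun y hy => ((hder2 y (hU01 hy)).continuousAt).continuousWithinAt
    · intro x hx
      rw [interior_Icc] at hx
      have hxU : x ∈ U := hU01 ⟨hx.1.le, hx.2.le⟩
      have hdF1 : ∀ z ∈ U, deriv F1 z = F2 z := fun z hz => (hder2 z hz).deriv
      have h2 : HasDerivAt (deriv F1) (F3 x) x :=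
        (hder3 x hxU).congr_of_eventuallyEq
          (Filter.eventuallyEq_of_mem (hUopen.mem_nhds hxU) hdF1)
      have heq : deriv (deriv F1) x = F3 x := h2.deriv
      show 0 < deriv^[2] F1 x
      rw [Function.iterate_succ, Function.iterate_one, Function.comp_apply, heq]
      exact hF3pos x (hDpos x hxU)
  -- uniqueness key
  have key : ∀ u v : ℝ, u ∈ Set.Ioo (0:ℝ) 1 → v ∈ Set.Ioo (0:ℝ) 1 →
      g u = 0 → g v = 0 → u < v → False := by
    intro u v hu hv hgu hgv huv
    have hsub1 : Set.Icc (0:ℝ) u ⊆ Set.Icc (0:ℝ) 1 :=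
      Set.Icc_subset_Icc le_rfl hu.2.le
    have hsub2 : Set.Icc u v ⊆ Set.Icc (0:ℝ) 1 :=
      Set.Icc_subset_Icc hu.1.le hv.2.le
    have hsub3 : Set.Icc v (1:ℝ) ⊆ Set.Icc (0:ℝ) 1 :=
      Set.Icc_subset_Icc hv.1.le le_rfl
    obtain ⟨c1, hc1, hc1eq⟩ := exists_hasDerivAt_eq_slope g F1 hu.1 (hcont.mono hsub1)
      (fun x hx => hgU1 x (hU01 ⟨hx.1.le, le_trans hx.2.le hu.2.le⟩))
    obtain ⟨c2, hc2, hc2eq⟩ := exists_hasDerivAt_eq_slope g F1 huv (hcont.mono hsub2)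
      (fun x hx => hgU1 x (hU01 ⟨le_trans hu.1.le hx.1.le, le_trans hx.2.le hv.2.le⟩))
    obtain ⟨c3, hc3, hc3eq⟩ := exists_hasDerivAt_eq_slope g F1 hv.2 (hcont.mono hsub3)
      (fun x hx => hgU1 x (hU01 ⟨le_trans hv.1.le hx.1.le, hx.2.le⟩))
    rw [hgu, hg0] at hc1eq
    rw [hgu, hgv] at hc2eq
    rw [hgv, hg1] at hc3eq
    have hF1c1 : F1 c1 < 0 := by
      rw [hc1eq]
      apply div_neg_of_neg_of_pos
      · linarith
      · linarith [hu.1]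
    have hF1c2 : F1 c2 = 0 := by rw [hc2eq]; simp
    have hF1c3 : F1 c3 < 0 := by
      rw [hc3eq]
      apply div_neg_of_neg_of_pos
      · linarith
      · linarith [hv.2]
    have h12 : c1 < c2 := lt_trans hc1.2 hc2.1
    have h23 : c2 < c3 := lt_trans hc2.2 hc3.1
    have h13 : c1 < c3 := lt_trans h12 h23
    have hc1m : c1 ∈ Set.Icc (0:ℝ) 1 :=
      ⟨hc1.1.le, by linarith [hc1.2, hu.2, hv.2]⟩
    have hc3m : c3 ∈ Set.Icc (0:ℝ) 1 :=
      ⟨by linarith [hc3.1, hv.1, hu.1], hc3.2.le⟩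
    have hden : (0:ℝ) < c3 - c1 := by linarith
    have ht : (0:ℝ) < (c3 - c2)/(c3 - c1) := div_pos (by linarith) hden
    have hr : (0:ℝ) < (c2 - c1)/(c3 - c1) := div_pos (by linarith) hden
    have hsum : (c3 - c2)/(c3 - c1) + (c2 - c1)/(c3 - c1) = 1 := by
      field_simp
      ring
    have hcomb : ((c3 - c2)/(c3 - c1)) • c1 + ((c2 - c1)/(c3 - c1)) • c3 = c2 := by
      simp only [smul_eq_mul]
      field_simp
      ring
    have hlt := hconv.2 hc1m hc3m (ne_of_lt h13) ht hr hsum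
    rw [hcomb, hF1c2] at hlt
    simp only [smul_eq_mul] at hlt
    linarith [mul_neg_of_pos_of_neg ht hF1c1, mul_neg_of_pos_of_neg hr hF1c3]
  refine ⟨hg0, hg1, ?_, ?_⟩
  · intro y hy
    have hyU : y ∈ U := hU01 hy
    have hD : 0 < 2*del - s*y := hDpos y hyU
    constructor
    · rw [show (3:ℕ) = 2 + 1 from rfl, iteratedDeriv_succ,
        show (2:ℕ) = 1 + 1 from rfl, iteratedDeriv_succ, iteratedDeriv_one]
      rw [hdg3 y hyU]
      exact hF3eq y (ne_of_gt hD)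
    · rw [← hF3eq y (ne_of_gt hD)]
      exact hF3pos y hD
  · have h0m : (0:ℝ) ∈ Set.Ioo (g 1) (g 0) := by
      rw [hg0, hg1]; constructor <;> linarith
    obtain ⟨y₀, hy₀, hgy₀⟩ := intermediate_value_Ioo' (by norm_num : (0:ℝ) ≤ 1) hcont h0m
    refine ⟨y₀, ⟨hy₀, hgy₀⟩, ?_⟩
    intro z hz
    rcases lt_trichotomy z y₀ with h|h|h
    · exact absurd (key z y₀ hz.1 hy₀ hz.2 hgy₀ h) not_false
    · exact h
    · exact absurd (key y₀ z hy₀ hz.1 hgy₀ hz.2 h) not_false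
end

section
/- Fix y ∈ (0,1) and suppose μ > (1−λ)/λ and λμθ < 2β. Define L(δ) = (1−δ)(1 − λμ(1−y)(1−δ)θ/(β(y+2(1−y)(1−δ)))) and R(δ) = δ(1 − (1−y)δθ(λμ−(1−λ))/(β(y+2(1−y)δ))). Then L(1/2) < R(1/2), L is strictly decreasing and R is strictly increasing on [1/2,1); hence L(δ) < R(δ) for all δ ∈ [1/2,1). -/
lemma aux_mono (y c u1 u2 : ℝ) (hy0 : 0 < y) (hc0 : 0 ≤ c) (hc : c < 2*(1-y))
    (h1 : 0 < u1) (h12 : u1 < u2) :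
    u1 - c*u1^2/(y+2*(1-y)*u1) < u2 - c*u2^2/(y+2*(1-y)*u2) := by
  have h2 : 0 < u2 := h1.trans h12
  have hy1 : 0 < 1 - y := by nlinarith
  have hD1 : 0 < y+2*(1-y)*u1 := by nlinarith
  have hD2 : 0 < y+2*(1-y)*u2 := by nlinarith
  have hS : 0 < y*(u1+u2) + 2*(1-y)*(u1*u2) := by positivity
  have key : c*u2^2/(y+2*(1-y)*u2) - c*u1^2/(y+2*(1-y)*u1) < u2 - u1 := by
    rw [div_sub_div _ _ hD2.ne' hD1.ne', div_lt_iff₀ (mul_pos hD2 hD1)]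
    nlinarith [mul_pos (sub_pos.2 h12) (mul_pos (sub_pos.2 hc) hS),
      mul_pos (sub_pos.2 h12) (mul_pos hy0 hy0)]
  linarith

theorem stmt_12 (lam mu th beta y : ℝ)
    (hlam : lam ∈ Set.Ioo (0:ℝ) 1) (hmu : 0 < mu) (hth : 0 < th) (hbeta : 0 < beta)
    (hy : y ∈ Set.Ioo (0:ℝ) 1)
    (hweight : mu > (1-lam)/lam) (hcost : lam*mu*th < 2*beta)
    (L R : ℝ → ℝ)
    (hL : ∀ d, L d = (1-d)*(1 - lam*mu*(1-y)*(1-d)*th/(beta*(y+2*(1-y)*(1-d)))))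
    (hR : ∀ d, R d = d*(1 - (1-y)*d*th*(lam*mu-(1-lam))/(beta*(y+2*(1-y)*d)))) :
    L (1/2) < R (1/2) ∧
    StrictAntiOn L (Set.Ico (1/2 : ℝ) 1) ∧
    StrictMonoOn R (Set.Ico (1/2 : ℝ) 1) ∧
    ∀ d ∈ Set.Ico (1/2 : ℝ) 1, L d < R d := by
  obtain ⟨hl0, hl1⟩ := hlam
  obtain ⟨hy0, hy1⟩ := hy
  have hy1' : 0 < 1 - y := by linarith
  have hlm : 1 - lam < lam*mu := by
    rw [gt_iff_lt, div_lt_iff₀ hl0] at hweight; linarith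
  set cL := lam*mu*(1-y)*th/beta with hcLdef
  set cR := (1-y)*th*(lam*mu-(1-lam))/beta with hcRdef
  have hcL0 : 0 ≤ cL := by positivity
  have hcL : cL < 2*(1-y) := by
    rw [hcLdef, div_lt_iff₀ hbeta]; nlinarith
  have hcR0 : 0 ≤ cR := by
    apply div_nonneg _ hbeta.le
    exact mul_nonneg (mul_pos hy1' hth).le (by linarith)
  have hcR : cR < 2*(1-y) := by
    rw [hcRdef, div_lt_iff₀ hbeta]
    nlinarith [mul_lt_mul_of_pos_left hcost hy1',
      mul_lt_mul_of_pos_left (show lam*mu-(1-lam) < lam*mu by linarith) (mul_pos hy1' hth)]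
  -- rewrite L and R in canonical form
  have hLc : ∀ d : ℝ, d < 1 → L d = (1-d) - cL*(1-d)^2/(y+2*(1-y)*(1-d)) := by
    intro d hd
    have hD : 0 < y+2*(1-y)*(1-d) := by nlinarith
    rw [hL, hcLdef]
    field_simp
  have hRc : ∀ d : ℝ, 0 < d → R d = d - cR*d^2/(y+2*(1-y)*d) := by
    intro d hd
    have hD : 0 < y+2*(1-y)*d := by nlinarith
    rw [hR, hcRdef]
    field_simp
  have hhalf : (1:ℝ)/2 ∈ Set.Ico (1/2 : ℝ) 1 := by norm_num
  have h0 : L (1/2) < R (1/2) := by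
    rw [hLc _ (by norm_num), hRc _ (by norm_num)]
    have hD : y+2*(1-y)*(1-(1:ℝ)/2) = 1 := by ring
    have hD' : y+2*(1-y)*((1:ℝ)/2) = 1 := by ring
    rw [hD, hD']
    have : cR < cL := by
      rw [hcLdef, hcRdef, div_lt_div_iff₀ hbeta hbeta]
      nlinarith [mul_pos (mul_pos hy1' hth) (sub_pos.2 hl1)]
    nlinarith
  have hA : StrictAntiOn L (Set.Ico (1/2 : ℝ) 1) := by
    intro a ha b hb hab
    rw [hLc _ ha.2, hLc _ hb.2]
    exact aux_mono y cL (1-b) (1-a) hy0 hcL0 hcL (by linarith [hb.2]) (by linarith)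
  have hM : StrictMonoOn R (Set.Ico (1/2 : ℝ) 1) := by
    intro a ha b hb hab
    rw [hRc _ (by linarith [ha.1]), hRc _ (by linarith [hb.1, ha.1])]
    exact aux_mono y cR a b hy0 hcR0 hcR (by linarith [ha.1]) hab
  refine ⟨h0, hA, hM, ?_⟩
  intro d hd
  rcases eq_or_lt_of_le hd.1 with h | h
  · rw [← h]; exact h0
  · calc L d < L (1/2) := hA hhalf hd h
      _ < R (1/2) := h0
      _ < R d := hM hhalf hd h
end

section
/- Let G(y) = g_M(y) as in the model and define f(y) = 2(1−δ)(1−y)λμθ(1−δ(1−y))/(β(y+2(1−y)(1−δ))²) − 1. If λμθ < 2β then f(0) = λμθ/(2β) − 1 < 0 and f'(y) = −2(1−δ)λμθ·y/(β(y+2(1−y)(1−δ))³) < 0 for y ∈ (0,1]; hence f(y) < 0 on [0,1], and consequently ∂g_M/∂δ (y) = −θρy(1−y)f(y) > 0 for y ∈ (0,1), so the unique root y*_M of g_M is increasing in δ. -/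
lemma aux_fderiv (lam mu th beta d y : ℝ) (hbeta : beta ≠ 0) (hD : y + 2*(1-y)*(1-d) ≠ 0) :
  HasDerivAt (fun y' : ℝ => 2*(1-d)*(1-y')*lam*mu*th*(1-d*(1-y'))/(beta*(y'+2*(1-y')*(1-d))^2) - 1)
    (-(2*(1-d)*lam*mu*th*y)/(beta*(y+2*(1-y)*(1-d))^3)) y := by
  have hu : HasDerivAt (fun y' : ℝ => 1 - y') (-1) y := by
    exact ((hasDerivAt_const y (1:ℝ)).sub (hasDerivAt_id y)).congr_deriv (by ring)
  have hv : HasDerivAt (fun y' : ℝ => 1 - d*(1-y')) d y := by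
    have h := (hasDerivAt_const y (1:ℝ)).sub ((hasDerivAt_const y d).mul hu)
    exact h.congr_deriv (by ring)
  have hN : HasDerivAt (fun y' : ℝ => 2*(1-d)*(1-y')*lam*mu*th*(1-d*(1-y')))
      ((2*(1-d)*(-1)*lam*mu*th)*(1-d*(1-y)) + (2*(1-d)*(1-y)*lam*mu*th)*d) y := by
    have h := ((((hu.const_mul (2*(1-d))).mul_const lam).mul_const mu).mul_const th).mul hv
    exact h.congr_deriv (by ring)
  have hlin : HasDerivAt (fun y' : ℝ => y' + 2*(1-y')*(1-d)) (1 + 2*(-1)*(1-d)) y := by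
    have h := (hasDerivAt_id y).add ((hu.const_mul 2).mul_const (1-d))
    exact h.congr_deriv (by ring)
  have hDen : HasDerivAt (fun y' : ℝ => beta*(y'+2*(1-y')*(1-d))^2)
      (beta*(2*(y+2*(1-y)*(1-d))*(1 + 2*(-1)*(1-d)))) y := by
    have h := (hlin.pow 2).const_mul beta
    exact h.congr_deriv (by ring)
  have hDen0 : beta*(y+2*(1-y)*(1-d))^2 ≠ 0 := mul_ne_zero hbeta (pow_ne_zero 2 hD)
  have h := (hN.div hDen hDen0).sub_const 1
  refine h.congr_deriv ?_
  field_simp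
  ring

lemma aux_gderiv (rho kap lam mu th beta d y : ℝ) (hbeta : beta ≠ 0)
    (hD : y + 2*(1-y)*(1-d) ≠ 0) :
  HasDerivAt (fun d' : ℝ => 1 + (rho*(1/2 - (1-d')*th) - 1 - kap)*y
        - rho*(1/2 - (1-d')*th)*y^2
        + rho*y*((1-d')*th*(1-y))^2*lam*mu/(beta*(y+2*(1-y)*(1-d'))))
    (-th*rho*y*(1-y)*(2*(1-d)*(1-y)*lam*mu*th*(1-d*(1-y))/(beta*(y+2*(1-y)*(1-d))^2) - 1)) d := by
  have ha : HasDerivAt (fun d' : ℝ => 1 - d') (-1) d := by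
    exact ((hasDerivAt_const d (1:ℝ)).sub (hasDerivAt_id d)).congr_deriv (by ring)
  have hin : HasDerivAt (fun d' : ℝ => 1/2 - (1-d')*th) th d := by
    have h := (hasDerivAt_const d (1/2:ℝ)).sub (ha.mul_const th)
    exact h.congr_deriv (by ring)
  have ht1 : HasDerivAt (fun d' : ℝ => (rho*(1/2 - (1-d')*th) - 1 - kap)*y) (rho*th*y) d := by
    have h := (((hin.const_mul rho).sub_const 1).sub_const kap).mul_const y
    exact h.congr_deriv (by ring)
  have ht2 : HasDerivAt (fun d' : ℝ => rho*(1/2 - (1-d')*th)*y^2) (rho*th*y^2) d := by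
    have h := (hin.const_mul rho).mul_const (y^2)
    exact h.congr_deriv (by ring)
  have hNum : HasDerivAt (fun d' : ℝ => rho*y*((1-d')*th*(1-y))^2*lam*mu)
      (rho*y*(2*((1-d)*th*(1-y))*(-1*th*(1-y)))*lam*mu) d := by
    have h := ((((((ha.mul_const th).mul_const (1-y)).pow 2).const_mul (rho*y)).mul_const lam).mul_const mu)
    exact h.congr_deriv (by ring)
  have hDen : HasDerivAt (fun d' : ℝ => beta*(y+2*(1-y)*(1-d'))) (beta*(-(2*(1-y)))) d := by
    have h := ((hasDerivAt_const d y).add ((ha.const_mul (2*(1-y))))).const_mul beta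
    exact h.congr_deriv (by ring)
  have hDen0 : beta*(y+2*(1-y)*(1-d)) ≠ 0 := mul_ne_zero hbeta hD
  have h := (((hasDerivAt_const d (1:ℝ)).add ht1).sub ht2).add (hNum.div hDen hDen0)
  refine h.congr_deriv ?_
  field_simp
  ring

lemma aux_fneg (lam mu th beta d y L : ℝ) (hL : 0 < L) (hcost : L < 2*beta)
    (hd : 1/2 < d) (hd1 : d < 1) (hy0 : 0 ≤ y) (hy1 : y ≤ 1) (hLdef : L = lam*mu*th) :
    2*(1-d)*(1-y)*lam*mu*th*(1-d*(1-y))/(beta*(y+2*(1-y)*(1-d))^2) - 1 < 0 := by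
  have hbeta : 0 < beta := by linarith
  have hD : 0 < y + 2*(1-y)*(1-d) := by nlinarith
  have hDen : 0 < beta*(y+2*(1-y)*(1-d))^2 := by positivity
  subst hLdef
  rw [sub_neg, div_lt_one hDen]
  nlinarith [sq_nonneg y, mul_pos (show (0:ℝ) < 2*beta - lam*mu*th by linarith) (pow_pos hD 2),
    mul_nonneg hL.le (sq_nonneg y)]

theorem stmt_17 (rho kap lam mu th beta : ℝ)
    (hrho : 0 < rho) (hkap : 0 < kap) (hlam : lam ∈ Set.Ioo (0:ℝ) 1) (hmu : 0 < mu)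
    (hth : 0 < th) (hbeta : 0 < beta) (hcost : lam*mu*th < 2*beta)
    (f gM : ℝ → ℝ → ℝ)
    (hf : ∀ d y, f d y = 2*(1-d)*(1-y)*lam*mu*th*(1-d*(1-y))/(beta*(y+2*(1-y)*(1-d))^2) - 1)
    (hgM : ∀ d y, gM d y = 1 + (rho*(1/2 - (1-d)*th) - 1 - kap)*y
        - rho*(1/2 - (1-d)*th)*y^2
        + rho*y*((1-d)*th*(1-y))^2*lam*mu/(beta*(y+2*(1-y)*(1-d)))) :
    (∀ d ∈ Set.Ioo (1/2 : ℝ) 1,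
      f d 0 = lam*mu*th/(2*beta) - 1 ∧ f d 0 < 0 ∧
      (∀ y ∈ Set.Ioc (0:ℝ) 1,
        HasDerivAt (fun y' => f d y') (-(2*(1-d)*lam*mu*th*y)/(beta*(y+2*(1-y)*(1-d))^3)) y ∧
        -(2*(1-d)*lam*mu*th*y)/(beta*(y+2*(1-y)*(1-d))^3) < 0) ∧
      (∀ y ∈ Set.Icc (0:ℝ) 1, f d y < 0) ∧
      (∀ y ∈ Set.Ioo (0:ℝ) 1,
        HasDerivAt (fun d' => gM d' y) (-th*rho*y*(1-y)*f d y) d ∧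
        0 < -th*rho*y*(1-y)*f d y)) ∧
    (∀ d1 ∈ Set.Ioo (1/2 : ℝ) 1, ∀ d2 ∈ Set.Ioo (1/2 : ℝ) 1, d1 < d2 →
      ∀ y1 ∈ Set.Ioo (0:ℝ) 1, ∀ y2 ∈ Set.Ioo (0:ℝ) 1,
        gM d1 y1 = 0 → gM d2 y2 = 0 →
        (∀ y ∈ Set.Ioo (0:ℝ) 1, y1 < y → gM d1 y < 0) →
        (∀ y ∈ Set.Ioo (0:ℝ) 1, y2 < y → gM d2 y < 0) →
        y1 < y2) := by
  obtain ⟨hlam0, hlam1⟩ := hlam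
  have hL : 0 < lam*mu*th := by positivity
  have hbne : beta ≠ 0 := ne_of_gt hbeta
  have main : ∀ d ∈ Set.Ioo (1/2 : ℝ) 1,
      f d 0 = lam*mu*th/(2*beta) - 1 ∧ f d 0 < 0 ∧
      (∀ y ∈ Set.Ioc (0:ℝ) 1,
        HasDerivAt (fun y' => f d y') (-(2*(1-d)*lam*mu*th*y)/(beta*(y+2*(1-y)*(1-d))^3)) y ∧
        -(2*(1-d)*lam*mu*th*y)/(beta*(y+2*(1-y)*(1-d))^3) < 0) ∧
      (∀ y ∈ Set.Icc (0:ℝ) 1, f d y < 0) ∧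
      (∀ y ∈ Set.Ioo (0:ℝ) 1,
        HasDerivAt (fun d' => gM d' y) (-th*rho*y*(1-y)*f d y) d ∧
        0 < -th*rho*y*(1-y)*f d y) := by
    intro d hd
    obtain ⟨hd1, hd2⟩ := hd
    have h1d : (0:ℝ) < 1 - d := by linarith
    have hDpos : ∀ y : ℝ, 0 ≤ y → y ≤ 1 → 0 < y + 2*(1-y)*(1-d) := by
      intro y h0 h1; nlinarith
    have hfneg : ∀ y ∈ Set.Icc (0:ℝ) 1, f d y < 0 := by
      intro y hy
      rw [hf]
      exact aux_fneg lam mu th beta d y (lam*mu*th) hL hcost hd1 hd2 hy.1 hy.2 rfl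
    refine ⟨?_, ?_, ?_, hfneg, ?_⟩
    · rw [hf]
      have h1 : (1:ℝ) - d ≠ 0 := ne_of_gt h1d
      field_simp
      ring
    · exact hfneg 0 ⟨le_rfl, zero_le_one⟩
    · intro y hy
      have hD := hDpos y hy.1.le hy.2
      constructor
      · have heq : (fun y' => f d y')
            = fun y' : ℝ => 2*(1-d)*(1-y')*lam*mu*th*(1-d*(1-y'))/(beta*(y'+2*(1-y')*(1-d))^2) - 1 :=
          funext fun y' => hf d y'
        rw [heq]
        exact aux_fderiv lam mu th beta d y hbne (ne_of_gt hD)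
      · have hnum : 0 < 2*(1-d)*lam*mu*th*y := by
          have := hy.1; positivity
        have hden : 0 < beta*(y+2*(1-y)*(1-d))^3 := by positivity
        exact div_neg_of_neg_of_pos (by linarith) hden
    · intro y hy
      have hD := hDpos y hy.1.le hy.2.le
      constructor
      · have heq : (fun d' => gM d' y)
            = fun d' : ℝ => 1 + (rho*(1/2 - (1-d')*th) - 1 - kap)*y
              - rho*(1/2 - (1-d')*th)*y^2
              + rho*y*((1-d')*th*(1-y))^2*lam*mu/(beta*(y+2*(1-y)*(1-d'))) :=
          funext fun d' => hgM d' y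
        rw [heq, hf]
        exact aux_gderiv rho kap lam mu th beta d y hbne (ne_of_gt hD)
      · have hfy : f d y < 0 := hfneg y ⟨hy.1.le, hy.2.le⟩
        have hpos : 0 < th*rho*y*(1-y) := by
          have h1 := hy.1; have h2 : 0 < 1 - y := by linarith [hy.2]
          positivity
        nlinarith
  refine ⟨main, ?_⟩
  intro d1 hd1 d2 hd2 hlt y1 hy1 y2 hy2 hroot1 hroot2 _ hafter2
  have hsub : Set.Icc d1 d2 ⊆ Set.Ioo (1/2 : ℝ) 1 := by
    intro x hx
    exact ⟨lt_of_lt_of_le hd1.1 hx.1, lt_of_le_of_lt hx.2 hd2.2⟩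
  have mono : ∀ y ∈ Set.Ioo (0:ℝ) 1, gM d1 y < gM d2 y := by
    intro y hy
    have hderiv : ∀ x ∈ Set.Icc d1 d2,
        HasDerivAt (fun d' => gM d' y) (-th*rho*y*(1-y)*f x y) x := by
      intro x hx
      exact ((main x (hsub hx)).2.2.2.2 y hy).1
    obtain ⟨c, hc, hceq⟩ := exists_hasDerivAt_eq_slope (fun d' => gM d' y)
      (fun x => -th*rho*y*(1-y)*f x y) hlt
      (fun x hx => (hderiv x hx).continuousAt.continuousWithinAt)
      (fun x hx => hderiv x ⟨hx.1.le, hx.2.le⟩)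
    have hcpos : 0 < -th*rho*y*(1-y)*f c y :=
      ((main c (hsub ⟨hc.1.le, hc.2.le⟩)).2.2.2.2 y hy).2
    rw [hceq] at hcpos
    have hd : 0 < d2 - d1 := by linarith
    have := mul_pos hcpos hd
    rw [div_mul_cancel₀ _ (ne_of_gt hd)] at this
    linarith
  by_contra hcon
  push_neg at hcon
  rcases lt_or_eq_of_le hcon with hlt2 | heq
  · have h1 : gM d2 y1 < 0 := hafter2 y1 hy1 hlt2
    have h2 : gM d1 y1 < gM d2 y1 := mono y1 hy1
    rw [hroot1] at h2
    linarith
  · have h2 : gM d1 y2 < gM d2 y2 := mono y2 hy2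
    rw [heq, hroot1] at h2
    rw [← heq, hroot2] at h2
    exact lt_irrefl 0 h2
end

section
/- The threshold ŷ_M, defined as the unique zero in (0,1) of V(y,M) = λ(y−2μ(1−y)(1−δ)θ)/(y+2(1−y)(1−δ)) + (1/β)(λμ(1−y)(1−δ)θ/(y+2(1−y)(1−δ)))², is strictly increasing in β: the partial derivative of V(y,M) with respect to β equals −(1/β²)(λμθ(1−y)(1−δ)/(y+2(1−y)(1−δ)))² < 0 for y ∈ [0,1), while V is strictly increasing in y, so by the implicit function theorem ∂ŷ_M/∂β > 0. -/
private lemma aux_mono_s18 (lam mu th del b : ℝ)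
    (hlam0 : 0 < lam) (hlam1 : lam < 1) (hmu : 0 < mu) (hth : 0 < th) (hb : 0 < b)
    (hdel : del ∈ Set.Ioo (1/2 : ℝ) 1) (hcost : mu*th < 2*b) :
    StrictMonoOn (fun y => lam*(y - 2*mu*(1-y)*(1-del)*th)/(y+2*(1-y)*(1-del))
        + (1/b)*(lam*mu*(1-y)*(1-del)*th/(y+2*(1-y)*(1-del)))^2) (Set.Icc (0:ℝ) 1) := by
  have hd1 : (1:ℝ)/2 < del := hdel.1
  have hd2 : del < 1 := hdel.2
  have key : ∀ y ∈ Set.Icc (0:ℝ) 1,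
      lam*(y - 2*mu*(1-y)*(1-del)*th)/(y+2*(1-y)*(1-del))
        + (1/b)*(lam*mu*(1-y)*(1-del)*th/(y+2*(1-y)*(1-del)))^2
      = lam - lam*(1+mu*th)*(2*(1-del)*(1-y)/(y+2*(1-y)*(1-del)))
        + (lam*mu*th/2)^2/b * (2*(1-del)*(1-y)/(y+2*(1-y)*(1-del)))^2 := by
    intro y hy
    have hD : 0 < y+2*(1-y)*(1-del) := by nlinarith [hy.1, hy.2]
    field_simp
    ring
  intro y1 hy1 y2 hy2 hlt
  have hD1 : 0 < y1+2*(1-y1)*(1-del) := by nlinarith [hy1.1, hy1.2]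
  have hD2 : 0 < y2+2*(1-y2)*(1-del) := by nlinarith [hy2.1, hy2.2]
  simp only
  rw [key y1 hy1, key y2 hy2]
  set t1 := 2*(1-del)*(1-y1)/(y1+2*(1-y1)*(1-del)) with ht1
  set t2 := 2*(1-del)*(1-y2)/(y2+2*(1-y2)*(1-del)) with ht2
  have ht1le : t1 ≤ 1 := by
    rw [ht1, div_le_one hD1]; nlinarith [hy1.1]
  have ht2nn : 0 ≤ t2 := by
    rw [ht2]
    apply div_nonneg _ hD2.le
    nlinarith [hy2.2]
  have htlt : t2 < t1 := by
    rw [ht1, ht2, div_lt_div_iff₀ hD2 hD1]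
    nlinarith [hy1.1, hy2.2]
  have h2k : (lam*mu*th/2)^2/b * 2 < lam*(1+mu*th) := by
    rw [div_mul_eq_mul_div, div_lt_iff₀ hb]
    nlinarith [mul_pos hmu hth, mul_pos hlam0 (mul_pos hmu hth),
      mul_pos (mul_pos hlam0 (mul_pos hmu hth)) (mul_pos hmu hth)]
  have hknn : 0 ≤ (lam*mu*th/2)^2/b := by positivity
  have hfac : 0 < lam*(1+mu*th) - (lam*mu*th/2)^2/b*(t1+t2) := by nlinarith
  nlinarith [mul_pos (sub_pos.2 htlt) hfac]

theorem stmt_18 (lam mu th beta del : ℝ)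
    (hlam : lam ∈ Set.Ioo (0:ℝ) 1) (hmu : 0 < mu) (hth : 0 < th) (hbeta : 0 < beta)
    (hdel : del ∈ Set.Ioo (1/2 : ℝ) 1)
    (hcost : mu*th < 2*beta) (hweight : mu > (1-lam)/lam)
    (V : ℝ → ℝ → ℝ)
    (hV : ∀ b y, V b y = lam*(y - 2*mu*(1-y)*(1-del)*th)/(y+2*(1-y)*(1-del))
        + (1/b)*(lam*mu*(1-y)*(1-del)*th/(y+2*(1-y)*(1-del)))^2) :
    (∀ y ∈ Set.Ico (0:ℝ) 1,
      HasDerivAt (fun b => V b y)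
        (-(1/beta^2)*(lam*mu*th*(1-y)*(1-del)/(y+2*(1-y)*(1-del)))^2) beta ∧
      -(1/beta^2)*(lam*mu*th*(1-y)*(1-del)/(y+2*(1-y)*(1-del)))^2 < 0) ∧
    StrictMonoOn (V beta) (Set.Icc (0:ℝ) 1) ∧
    (∀ beta2 : ℝ, beta < beta2 →
      ∀ y1 ∈ Set.Ioo (0:ℝ) 1, ∀ y2 ∈ Set.Ioo (0:ℝ) 1,
        V beta y1 = 0 → V beta2 y2 = 0 → y1 < y2) := by
  obtain ⟨hlam0, hlam1⟩ := hlam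
  have hd1 : (1:ℝ)/2 < del := hdel.1
  have hd2 : del < 1 := hdel.2
  have hbne : beta ≠ 0 := ne_of_gt hbeta
  have hmonoV : ∀ b : ℝ, 0 < b → mu*th < 2*b → StrictMonoOn (V b) (Set.Icc (0:ℝ) 1) := by
    intro b hb hc
    have := aux_mono_s18 lam mu th del b hlam0 hlam1 hmu hth hb hdel hc
    intro y1 hy1 y2 hy2 hlt
    have := this hy1 hy2 hlt
    simpa [hV] using this
  refine ⟨?_, hmonoV beta hbeta hcost, ?_⟩
  · intro y hy
    have hD : 0 < y+2*(1-y)*(1-del) := by nlinarith [hy.1, hy.2]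
    have h1y : 0 < 1-y := by linarith [hy.2]
    have h1d : 0 < 1-del := by linarith
    have hnum : 0 < lam*mu*th*(1-y)*(1-del) :=
      mul_pos (mul_pos (mul_pos (mul_pos hlam0 hmu) hth) h1y) h1d
    have hC : 0 < lam*mu*th*(1-y)*(1-del)/(y+2*(1-y)*(1-del)) := div_pos hnum hD
    constructor
    · have h0 : HasDerivAt (fun b : ℝ => b⁻¹) (-(beta^2)⁻¹) beta := hasDerivAt_inv hbne
      have h1 := ((h0.const_mul ((lam*mu*(1-y)*(1-del)*th/(y+2*(1-y)*(1-del)))^2)).const_add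
        (lam*(y - 2*mu*(1-y)*(1-del)*th)/(y+2*(1-y)*(1-del))))
      have h2 : (fun b : ℝ => lam*(y - 2*mu*(1-y)*(1-del)*th)/(y+2*(1-y)*(1-del))
          + (lam*mu*(1-y)*(1-del)*th/(y+2*(1-y)*(1-del)))^2 * b⁻¹) = fun b => V b y := by
        funext b
        rw [hV]
        ring
      rw [h2] at h1
      refine h1.congr_deriv ?_
      ring
    · have hsq : 0 < (lam*mu*th*(1-y)*(1-del)/(y+2*(1-y)*(1-del)))^2 := pow_pos hC 2
      have : 0 < 1/beta^2 := by positivity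
      nlinarith
  · intro beta2 hb12 y1 hy1 y2 hy2 hz1 hz2
    have hb2 : 0 < beta2 := lt_trans hbeta hb12
    have hD1 : 0 < y1+2*(1-y1)*(1-del) := by nlinarith [hy1.1.le, hy1.2.le]
    have hnum : 0 < lam*mu*(1-y1)*(1-del)*th :=
      mul_pos (mul_pos (mul_pos (mul_pos hlam0 hmu) (by linarith [hy1.2])) (by linarith)) hth
    have hCsq : 0 < (lam*mu*(1-y1)*(1-del)*th/(y1+2*(1-y1)*(1-del)))^2 :=
      pow_pos (div_pos hnum hD1) 2
    have hlt : V beta2 y1 < 0 := by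
      have e1 := hV beta y1
      have e2 := hV beta2 y1
      rw [hz1] at e1
      rw [e2]
      have hinv : 1/beta2 < 1/beta := by
        rw [div_lt_div_iff₀ hb2 hbeta]; linarith
      nlinarith
    by_contra hcon
    push_neg at hcon
    have hmem1 : y1 ∈ Set.Icc (0:ℝ) 1 := ⟨hy1.1.le, hy1.2.le⟩
    have hmem2 : y2 ∈ Set.Icc (0:ℝ) 1 := ⟨hy2.1.le, hy2.2.le⟩
    have hmono := hmonoV beta2 hb2 (lt_trans hcost (by linarith))
    have : V beta2 y2 ≤ V beta2 y1 := by
      rcases lt_or_eq_of_le hcon with h | h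
      · exact (hmono hmem2 hmem1 h).le
      · rw [h]
    linarith [hz2 ▸ this, hlt]
end
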